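/- Let A and B be finite pseudocomplemented distributive lattices, h : A → B a surjective homomorphism, b ∈ B, and let a be the meet of the set h⁻¹[↑b] = {c ∈ A : b ≤ h(c)}. Then h(a) = b; for every c ∈ A with c < a one has h(c) < b; and if b is join-irreducible in B, then a is join-irreducible in A. -/

import Mathlib

/-- An element of a lattice with a least element is join-irreducible if it is nonzero and
`a = b ⊔ c` implies `a = b` or `a = c`. -/
def JoinIrr {A : Type*} [Lattice A] [OrderBot A] (a : A) : Prop :=
  a ≠ ⊥ ∧ ∀ b c : A, a = b ⊔ c → a = b ∨ a = c

/-- Let `A` and `B` be finite pseudocomplemented distributive lattices (bounded distributive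
lattices with operations `negA`, `negB` satisfying `x ≤ ¬y ↔ x ⊓ y = ⊥`), `h : A → B` a
surjective homomorphism (preserving `⊓`, `⊔`, `¬`, `⊥`, `⊤`), `b ∈ B`, and let `a` be the
meet of `h⁻¹[↑b] = {c : b ≤ h c}`. Then `h a = b`; `h c < b` whenever `c < a`; and if `b` is
join-irreducible then so is `a`. -/
theorem meet_preimage_upset_properties
    {A B : Type*} [DistribLattice A] [BoundedOrder A] [Finite A]
    [DistribLattice B] [BoundedOrder B] [Finite B]
    (negA : A → A) (hA : ∀ x y : A, x ≤ negA y ↔ x ⊓ y = ⊥)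
    (negB : B → B) (hB : ∀ x y : B, x ≤ negB y ↔ x ⊓ y = ⊥)
    (h : A → B) (hsurj : Function.Surjective h)
    (hinf : ∀ x y, h (x ⊓ y) = h x ⊓ h y) (hsup : ∀ x y, h (x ⊔ y) = h x ⊔ h y)
    (hnegh : ∀ x, h (negA x) = negB (h x)) (hbot : h ⊥ = ⊥) (htop : h ⊤ = ⊤)
    (b : B) (a : A)
    (ha : a = (Set.toFinite {c : A | b ≤ h c}).toFinset.inf id) :
    h a = b ∧ (∀ c : A, c < a → h c < b) ∧ (JoinIrr b → JoinIrr a) := by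
  classical
  set s := (Set.toFinite {c : A | b ≤ h c}).toFinset with hs
  have hmem : ∀ c : A, c ∈ s ↔ b ≤ h c := by
    intro c; simp [hs, Set.Finite.mem_toFinset]
  -- h maps finset infs to finset infs
  have hmap : ∀ t : Finset A, h (t.inf id) = t.inf h := by
    intro t
    induction t using Finset.induction_on with
    | empty => simpa using htop
    | insert _ _ hx ih => simp [Finset.inf_insert, hinf, ih]
  -- a ≤ c for all c in s
  have hale : ∀ c : A, b ≤ h c → a ≤ c := by
    intro c hc
    rw [ha]
    exact Finset.inf_le ((hmem c).mpr hc)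
  have hha : h a = b := by
    obtain ⟨c0, hc0⟩ := hsurj b
    rw [ha, hmap]
    apply le_antisymm
    · exact le_trans (Finset.inf_le ((hmem c0).mpr hc0.ge)) hc0.le
    · exact Finset.le_inf fun c hc => (hmem c).mp hc
  have hmono : ∀ x y : A, x ≤ y → h x ≤ h y := by
    intro x y hxy
    have : h (x ⊓ y) = h x := by rw [inf_eq_left.mpr hxy]
    rw [hinf] at this
    exact inf_eq_left.mp this
  refine ⟨hha, ?_, ?_⟩
  · intro c hc
    refine lt_of_le_of_ne (hha ▸ hmono c a hc.le) fun hcb => ?_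
    exact absurd (hale c hcb.ge) (not_le_of_gt hc)
  · rintro ⟨hb0, hbj⟩
    constructor
    · intro h0
      exact hb0 (by rw [← hha, h0, hbot])
    · intro c d hcd
      have : b = h c ⊔ h d := by rw [← hha, hcd, hsup]
      rcases hbj _ _ this with hbc | hbd
      · exact Or.inl (le_antisymm (hale c hbc.le) (le_sup_left.trans hcd.ge))
      · exact Or.inr (le_antisymm (hale d hbd.le) (le_sup_right.trans hcd.ge))
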